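/- Let X = R·S be ℓ₁-norm symmetric with R > 0 a.s. Then the joint survival function of X satisfies P[X > x] = ψ(x_1 + ... + x_d) for all x ∈ ℝ_+^d, where ψ(t) = P[R S_1 > t], with S_1 the first coordinate of S. -/

import Mathlib

open MeasureTheory ProbabilityTheory Filter Set

theorem l1_norm_symmetric_joint_survival
    {Ω : Type*} [MeasureSpace Ω] [IsProbabilityMeasure (ℙ : Measure Ω)]
    (d : ℕ) (hd : 2 ≤ d)
    (R : Ω → ℝ) (S : Ω → (Fin d → ℝ))
    (hRm : Measurable R) (hSm : Measurable S)
    (hR : ∀ᵐ ω ∂ℙ, 0 < R ω)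
    (hInd : IndepFun R S ℙ)
    (hSsurv : ∀ x : Fin d → ℝ, (∀ i, 0 ≤ x i) →
      (ℙ {ω | ∀ i, x i < S ω i}).toReal = (max (1 - ∑ i, x i) 0) ^ (d - 1))
    (ψ : ℝ → ℝ)
    (hψ : ∀ t : ℝ, ψ t = (ℙ {ω | t < R ω * S ω ⟨0, by omega⟩}).toReal) :
    ∀ x : Fin d → ℝ, (∀ i, 0 ≤ x i) →
      (ℙ {ω | ∀ i, x i < R ω * S ω i}).toReal = ψ (∑ i, x i) := by
  intro x hx
  set i0 : Fin d := ⟨0, by omega⟩ with hi0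
  set t : ℝ := ∑ i, x i with ht
  have htpos : 0 ≤ t := Finset.sum_nonneg fun i _ => hx i
  rw [hψ]
  congr 1
  -- a.s. positivity of coordinates of S
  have hSpos : ∀ᵐ ω ∂ℙ, ∀ i, 0 < S ω i := by
    have h0 := hSsurv 0 (fun i => le_rfl)
    simp only [Pi.zero_apply, Finset.sum_const_zero, sub_zero, max_eq_left zero_le_one,
      one_pow] at h0
    have hms : MeasurableSet {ω | ∀ i, (0:ℝ) < S ω i} := by
      have : {ω | ∀ i, (0:ℝ) < S ω i} = ⋂ i, {ω | (0:ℝ) < S ω i} := by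
        ext ω; simp
      rw [this]
      exact MeasurableSet.iInter fun i =>
        measurableSet_lt measurable_const ((measurable_pi_apply i).comp hSm)
    have h1 : ℙ {ω | ∀ i, (0:ℝ) < S ω i} = 1 := by
      have := measure_ne_top ℙ {ω | ∀ i, (0:ℝ) < S ω i}
      rw [← ENNReal.toReal_eq_toReal_iff' this ENNReal.one_ne_top, h0, ENNReal.toReal_one]
    rw [← prob_compl_eq_zero_iff hms] at h1
    rw [ae_iff]
    exact h1
  -- key pointwise claim
  have key : ∀ r : ℝ, 0 < r →
      ℙ {ω | ∀ i, x i < r * S ω i} = ℙ {ω | t < r * S ω i0} := by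
    intro r hr
    have hA : {ω | ∀ i, x i < r * S ω i} = {ω | ∀ i, (fun i => x i / r) i < S ω i} := by
      ext ω
      simp only [mem_setOf_eq]
      constructor <;> intro h i <;> have := h i
      · exact (div_lt_iff₀ hr).2 (by linarith [mul_comm r (S ω i)] )
      · have := (div_lt_iff₀ hr).1 this; linarith [mul_comm (S ω i) r]
    have hAr := hSsurv (fun i => x i / r) (fun i => div_nonneg (hx i) hr.le)
    rw [← hA] at hAr
    have hsum : ∑ i, x i / r = t / r := by rw [← Finset.sum_div]
    rw [hsum] at hAr
    -- RHS
    set y : Fin d → ℝ := Pi.single i0 (t / r) with hy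
    have hB : {ω | t < r * S ω i0} =ᵐ[ℙ]
        {ω | ∀ i, y i < S ω i} := by
      rw [Filter.eventuallyEq_set]
      filter_upwards [hSpos] with ω hω
      show t < r * S ω i0 ↔ ∀ i, y i < S ω i
      constructor
      · intro h i
        rcases eq_or_ne i i0 with rfl | hne
        · rw [hy, Pi.single_eq_same]
          exact (div_lt_iff₀ hr).2 (by linarith [mul_comm r (S ω i0)])
        · rw [hy, Pi.single_eq_of_ne hne]; exact hω i
      · intro h
        have := h i0
        rw [hy, Pi.single_eq_same] at this
        have := (div_lt_iff₀ hr).1 this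
        linarith [mul_comm (S ω i0) r]
    have hBr := hSsurv y
      (fun i => by
        rcases eq_or_ne i i0 with rfl | hne
        · rw [hy, Pi.single_eq_same]; exact div_nonneg htpos hr.le
        · rw [hy, Pi.single_eq_of_ne hne])
    have hsum2 : ∑ i, y i = t / r := by
      simp [hy, Finset.sum_pi_single]
    rw [hsum2] at hBr
    rw [measure_congr hB]
    exact (ENNReal.toReal_eq_toReal_iff' (measure_ne_top _ _) (measure_ne_top _ _)).1
      (hAr.trans hBr.symm)
  -- Fubini via independence
  have hmap := (indepFun_iff_map_prod_eq_prod_map_map hRm.aemeasurable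
    hSm.aemeasurable).1 hInd
  have hmA : MeasurableSet {p : ℝ × (Fin d → ℝ) | ∀ i, x i < p.1 * p.2 i} := by
    have : {p : ℝ × (Fin d → ℝ) | ∀ i, x i < p.1 * p.2 i} =
        ⋂ i, {p : ℝ × (Fin d → ℝ) | x i < p.1 * p.2 i} := by ext p; simp
    rw [this]
    exact MeasurableSet.iInter fun i => measurableSet_lt measurable_const
      (measurable_fst.mul ((measurable_pi_apply i).comp measurable_snd))
  have hmB : MeasurableSet {p : ℝ × (Fin d → ℝ) | t < p.1 * p.2 i0} :=
    measurableSet_lt measurable_const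
      (measurable_fst.mul ((measurable_pi_apply i0).comp measurable_snd))
  have e1 : ℙ {ω | ∀ i, x i < R ω * S ω i} =
      (Measure.map (fun ω => (R ω, S ω)) ℙ) {p : ℝ × (Fin d → ℝ) | ∀ i, x i < p.1 * p.2 i} := by
    rw [Measure.map_apply (hRm.prodMk hSm) hmA]; rfl
  have e2 : ℙ {ω | t < R ω * S ω i0} =
      (Measure.map (fun ω => (R ω, S ω)) ℙ) {p : ℝ × (Fin d → ℝ) | t < p.1 * p.2 i0} := by
    rw [Measure.map_apply (hRm.prodMk hSm) hmB]; rfl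
  rw [e1, e2, hmap, Measure.prod_apply hmA, Measure.prod_apply hmB]
  refine lintegral_congr_ae ?_
  have hRpos : ∀ᵐ r ∂(Measure.map R ℙ), 0 < r :=
    (ae_map_iff hRm.aemeasurable measurableSet_Ioi).2 hR
  filter_upwards [hRpos] with r hr
  have hmA' : MeasurableSet {s : Fin d → ℝ | ∀ i, x i < r * s i} := by
    have : {s : Fin d → ℝ | ∀ i, x i < r * s i} =
        ⋂ i, {s : Fin d → ℝ | x i < r * s i} := by ext s; simp
    rw [this]
    exact MeasurableSet.iInter fun i => measurableSet_lt measurable_const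
      (Measurable.const_mul (f := fun s : Fin d → ℝ => s i) (measurable_pi_apply i) r)
  have hmB' : MeasurableSet {s : Fin d → ℝ | t < r * s i0} :=
    measurableSet_lt measurable_const (Measurable.const_mul (f := fun s : Fin d → ℝ => s i0) (measurable_pi_apply i0) r)
  have l1 : Prod.mk r ⁻¹' {p : ℝ × (Fin d → ℝ) | ∀ i, x i < p.1 * p.2 i} =
      {s : Fin d → ℝ | ∀ i, x i < r * s i} := rfl
  have l2 : Prod.mk r ⁻¹' {p : ℝ × (Fin d → ℝ) | t < p.1 * p.2 i0} =
      {s : Fin d → ℝ | t < r * s i0} := rfl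
  rw [l1, l2, Measure.map_apply hSm hmA', Measure.map_apply hSm hmB']
  exact key r hr
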